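/- If Γ ⊢_{NWF_{N₂}} A then Γ ⊢_{HWF_{N₂}} A; that is, every formula derivable from Γ in the natural deduction system NWF_{N₂} is derivable from Γ in the restricted Hilbert system WF_{N₂}. -/

import Mathlib

/-- Formulas of subintuitionistic propositional logic. -/
inductive Fml : Type
  | atom : ℕ → Fml
  | bot  : Fml
  | and  : Fml → Fml → Fml
  | or   : Fml → Fml → Fml
  | imp  : Fml → Fml → Fml
deriving DecidableEq

/-- `A ↔ B` abbreviates `(A → B) ∧ (B → A)`. -/
def Fml.biimp (A B : Fml) : Fml := (A.imp B).and (B.imp A)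

/-- The extra axiom schemes / rules among I, C, D, Ĉ, D̂, N, N₂. -/
inductive ExtAx : Type
  | I | C | D | Chat | Dhat | N | N2
deriving DecidableEq

/-- Theorems of the Hilbert system WF extended with the schemes/rules in `E`
(derivations with no assumptions; all rules unrestricted here). -/
inductive HThm (E : Set ExtAx) : Fml → Prop
  | ax1 (A B : Fml)   : HThm E (A.imp (A.or B))
  | ax2 (A B : Fml)   : HThm E (B.imp (A.or B))
  | ax3 (A B : Fml)   : HThm E ((A.and B).imp A)
  | ax4 (A B : Fml)   : HThm E ((A.and B).imp B)
  | ax7 (A B C : Fml) : HThm E ((A.and (B.or C)).imp ((A.and B).or (A.and C)))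
  | ax8 (A : Fml)     : HThm E (A.imp A)
  | ax14 (A : Fml)    : HThm E (Fml.bot.imp A)
  | mp {A B : Fml}    : HThm E A → HThm E (A.imp B) → HThm E B
  | af {A : Fml} (B : Fml) : HThm E A → HThm E (B.imp A)
  | tr {A B C : Fml}  : HThm E (A.imp B) → HThm E (B.imp C) → HThm E (A.imp C)
  | rc {A B C : Fml}  : HThm E (A.imp B) → HThm E (A.imp C) → HThm E (A.imp (B.and C))
  | rd {A B C : Fml}  : HThm E (A.imp C) → HThm E (B.imp C) → HThm E ((A.or B).imp C)
  | conj {A B : Fml}  : HThm E A → HThm E B → HThm E (A.and B)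
  | re {A B C D : Fml} : HThm E (A.biimp B) → HThm E (C.biimp D) →
      HThm E ((A.imp C).biimp (B.imp D))
  | axI (A B C : Fml) : ExtAx.I ∈ E →
      HThm E (((A.imp B).and (B.imp C)).imp (A.imp C))
  | axC (A B C : Fml) : ExtAx.C ∈ E →
      HThm E (((A.imp B).and (A.imp C)).imp (A.imp (B.and C)))
  | axD (A B C : Fml) : ExtAx.D ∈ E →
      HThm E (((A.imp C).and (B.imp C)).imp ((A.or B).imp C))
  | axChat (A B C : Fml) : ExtAx.Chat ∈ E →
      HThm E ((A.imp (B.and C)).imp ((A.imp B).and (A.imp C)))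
  | axDhat (A B C : Fml) : ExtAx.Dhat ∈ E →
      HThm E (((A.or B).imp C).imp ((A.imp C).and (B.imp C)))
  | ruleN {A B C D : Fml} : ExtAx.N ∈ E →
      HThm E (A.imp (B.or C)) → HThm E (C.imp (A.or D)) →
      HThm E ((A.and D).imp B) → HThm E ((C.and B).imp D) →
      HThm E ((A.imp B).biimp (C.imp D))
  | ruleN2 {A B C D : Fml} : ExtAx.N2 ∈ E →
      HThm E (C.imp (A.or D)) → HThm E ((C.and B).imp D) →
      HThm E ((A.imp B).imp (C.imp D))

/-- Restricted derivability from assumptions in the Hilbert system WF + `E`: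
besides assumptions and theorems, only the conjunction rule is unrestricted, and
modus ponens may be used only when the major premise `A → B` is a theorem
(derived with no assumptions); all other rules are confined to theorems. -/
inductive HDer (E : Set ExtAx) (Γ : Set Fml) : Fml → Prop
  | hyp {A : Fml}  : A ∈ Γ → HDer E Γ A
  | thm {A : Fml}  : HThm E A → HDer E Γ A
  | conj {A B : Fml} : HDer E Γ A → HDer E Γ B → HDer E Γ (A.and B)
  | mp {A B : Fml} : HDer E Γ A → HThm E (A.imp B) → HDer E Γ B

/-- Tags for the optional implication-introduction rules of the natural
deduction systems. -/
inductive NRule : Type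
  | impI1 | impI2 | impN | impN2 | impChat | impDhat | impAnd | impOr | impTr
deriving DecidableEq

/-- Natural deduction derivations for the system with optional rules `R`.
`Deriv R Γ A` is a derivation of `A` all of whose open assumptions lie in `Γ`. -/
inductive Deriv (R : Set NRule) : Set Fml → Fml → Type
  | hyp (Γ : Set Fml) (A : Fml) : A ∈ Γ → Deriv R Γ A
  | andI {Γ : Set Fml} {A B : Fml} :
      Deriv R Γ A → Deriv R Γ B → Deriv R Γ (A.and B)
  | andE1 {Γ : Set Fml} {A B : Fml} :
      Deriv R Γ (A.and B) → Deriv R Γ A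
  | andE2 {Γ : Set Fml} {A B : Fml} :
      Deriv R Γ (A.and B) → Deriv R Γ B
  | orI1 {Γ : Set Fml} {A : Fml} (B : Fml) :
      Deriv R Γ A → Deriv R Γ (A.or B)
  | orI2 {Γ : Set Fml} (A : Fml) {B : Fml} :
      Deriv R Γ B → Deriv R Γ (A.or B)
  | orE {Γ : Set Fml} {A B C : Fml} :
      Deriv R Γ (A.or B) → Deriv R (insert A Γ) C → Deriv R (insert B Γ) C →
      Deriv R Γ C
  | botE {Γ : Set Fml} (A : Fml) :
      Deriv R Γ Fml.bot → Deriv R Γ A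
  | impI {Γ : Set Fml} {A B : Fml} :
      Deriv R {A} B → Deriv R Γ (A.imp B)
  | impE {Γ : Set Fml} {A B : Fml} :
      Deriv R Γ A → Deriv R (∅ : Set Fml) (A.imp B) → Deriv R Γ B
  | impI1 {Γ : Set Fml} {A B D : Fml} :
      NRule.impI1 ∈ R → Deriv R {B} D → Deriv R {D} B →
      Deriv R Γ ((A.imp B).imp (A.imp D))
  | impI2 {Γ : Set Fml} {A B D : Fml} :
      NRule.impI2 ∈ R → Deriv R {B} D → Deriv R {D} B →
      Deriv R Γ ((B.imp A).imp (D.imp A))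
  | impIN {Γ : Set Fml} {A B C D : Fml} :
      NRule.impN ∈ R →
      Deriv R {A} (C.or B) → Deriv R {D} B → Deriv R {C} (A.or D) → Deriv R {B} D →
      Deriv R Γ ((A.imp B).imp (C.imp D))
  | impIN2 {Γ : Set Fml} {A B C D : Fml} :
      NRule.impN2 ∈ R →
      Deriv R {C} (A.or D) → Deriv R {B} D →
      Deriv R Γ ((A.imp B).imp (C.imp D))
  | impIChat {Γ : Set Fml} {A B : Fml} (C : Fml) :
      NRule.impChat ∈ R → Deriv R {A} B →
      Deriv R Γ ((C.imp A).imp (C.imp B))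
  | impIDhat {Γ : Set Fml} {A B : Fml} (C : Fml) :
      NRule.impDhat ∈ R → Deriv R {A} B →
      Deriv R Γ ((B.imp C).imp (A.imp C))
  | impIAnd {Γ : Set Fml} {A B C : Fml} :
      NRule.impAnd ∈ R → Deriv R Γ (A.imp B) → Deriv R Γ (A.imp C) →
      Deriv R Γ (A.imp (B.and C))
  | impIOr {Γ : Set Fml} {A B C : Fml} :
      NRule.impOr ∈ R → Deriv R Γ (A.imp C) → Deriv R Γ (B.imp C) →
      Deriv R Γ ((A.or B).imp C)
  | impITr {Γ : Set Fml} {A B C : Fml} :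
      NRule.impTr ∈ R → Deriv R Γ (A.imp B) → Deriv R Γ (B.imp C) →
      Deriv R Γ (A.imp C)

/-- `Γ ⊢ A` in the natural deduction system with optional rules `R`. -/
def NDer (R : Set NRule) (Γ : Set Fml) (A : Fml) : Prop :=
  Nonempty (Deriv R Γ A)

/-- A derivation may serve as the major premise of an elimination rule in a
normal derivation: it is an assumption or ends with an elimination rule
different from ∨E (i.e. ∧E or →E). -/
def Deriv.MajorOK : ∀ {R : Set NRule} {Γ : Set Fml} {A : Fml}, Deriv R Γ A → Prop
  | _, _, _, .hyp _ _ _ => True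
  | _, _, _, .andE1 _   => True
  | _, _, _, .andE2 _   => True
  | _, _, _, .impE _ _  => True
  | _, _, _, _          => False

/-- A derivation is normal if every major premise of an elimination rule is
either an assumption or the conclusion of an elimination rule different
from ∨E. -/
def Deriv.Normal {R : Set NRule} : ∀ {Γ : Set Fml} {A : Fml}, Deriv R Γ A → Prop
  | _, _, .hyp _ _ _ => True
  | _, _, .andI d e => d.Normal ∧ e.Normal
  | _, _, .andE1 d => d.MajorOK ∧ d.Normal
  | _, _, .andE2 d => d.MajorOK ∧ d.Normal
  | _, _, .orI1 _ d => d.Normal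
  | _, _, .orI2 _ d => d.Normal
  | _, _, .orE d e f => d.MajorOK ∧ d.Normal ∧ e.Normal ∧ f.Normal
  | _, _, .botE _ d => d.Normal
  | _, _, .impI d => d.Normal
  | _, _, .impE d e => e.MajorOK ∧ d.Normal ∧ e.Normal
  | _, _, .impI1 _ d e => d.Normal ∧ e.Normal
  | _, _, .impI2 _ d e => d.Normal ∧ e.Normal
  | _, _, .impIN _ d e f g => d.Normal ∧ e.Normal ∧ f.Normal ∧ g.Normal
  | _, _, .impIN2 _ d e => d.Normal ∧ e.Normal
  | _, _, .impIChat _ _ d => d.Normal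
  | _, _, .impIDhat _ _ d => d.Normal
  | _, _, .impIAnd _ d e => d.Normal ∧ e.Normal
  | _, _, .impIOr _ d e => d.Normal ∧ e.Normal
  | _, _, .impITr _ d e => d.Normal ∧ e.Normal

section AuxNatDedToHilbert

variable {E : Set ExtAx}

/-- Conjunctions of formulas from `Γ`. -/
inductive ConjOf (Γ : Set Fml) : Fml → Prop
  | mem {A : Fml} : A ∈ Γ → ConjOf Γ A
  | and {A B : Fml} : ConjOf Γ A → ConjOf Γ B → ConjOf Γ (A.and B)

lemma conjOf_hder {Γ : Set Fml} {C : Fml} (h : ConjOf Γ C) : HDer E Γ C := by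
  induction h with
  | mem h => exact .hyp h
  | and _ _ ih1 ih2 => exact .conj ih1 ih2

lemma hder_iff {Γ : Set Fml} {A : Fml} :
    HDer E Γ A ↔ HThm E A ∨ ∃ C, ConjOf Γ C ∧ HThm E (C.imp A) := by
  constructor
  · intro h
    induction h with
    | hyp h => exact Or.inr ⟨_, .mem h, .ax8 _⟩
    | thm h => exact Or.inl h
    | conj _ _ ih1 ih2 =>
      rcases ih1 with h1 | ⟨C1, hC1, h1⟩
      · rcases ih2 with h2 | ⟨C2, hC2, h2⟩
        · exact Or.inl (.conj h1 h2)
        · exact Or.inr ⟨C2, hC2, .rc (.af _ h1) h2⟩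
      · rcases ih2 with h2 | ⟨C2, hC2, h2⟩
        · exact Or.inr ⟨C1, hC1, .rc h1 (.af _ h2)⟩
        · exact Or.inr ⟨C1.and C2, .and hC1 hC2,
            .rc (.tr (.ax3 _ _) h1) (.tr (.ax4 _ _) h2)⟩
    | mp _ hAB ih =>
      rcases ih with h1 | ⟨C, hC, h1⟩
      · exact Or.inl (.mp h1 hAB)
      · exact Or.inr ⟨C, hC, .tr h1 hAB⟩
  · rintro (h | ⟨C, hC, h⟩)
    · exact .thm h
    · exact .mp (conjOf_hder hC) h

lemma conjOf_singleton {A C : Fml} (h : ConjOf {A} C) : HThm E (A.imp C) := by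
  induction h with
  | mem h => cases h; exact .ax8 _
  | and _ _ ih1 ih2 => exact .rc ih1 ih2

lemma conjOf_empty {C : Fml} (h : ConjOf (∅ : Set Fml) C) : False := by
  induction h with
  | mem h => exact h
  | and _ _ ih1 _ => exact ih1

lemma hder_empty {A : Fml} (h : HDer E (∅ : Set Fml) A) : HThm E A := by
  rcases hder_iff.1 h with h | ⟨C, hC, _⟩
  · exact h
  · exact absurd hC conjOf_empty

lemma hder_singleton {A B : Fml} (h : HDer E ({A} : Set Fml) B) :
    HThm E (A.imp B) := by
  rcases hder_iff.1 h with h | ⟨C, hC, h⟩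
  · exact .af _ h
  · exact .tr (conjOf_singleton hC) h

lemma conjOf_insert {Γ : Set Fml} {A G : Fml} (h : ConjOf (insert A Γ) G) :
    ConjOf Γ G ∨ HThm E (A.imp G) ∨
      ∃ K, ConjOf Γ K ∧ HThm E ((A.and K).imp G) := by
  induction h with
  | mem h =>
    rcases h with h | h
    · subst h; exact Or.inr (Or.inl (.ax8 _))
    · exact Or.inl (.mem h)
  | and h1 h2 ih1 ih2 =>
    rcases ih1 with g1 | g1 | ⟨K1, hK1, g1⟩
    · rcases ih2 with g2 | g2 | ⟨K2, hK2, g2⟩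
      · exact Or.inl (.and g1 g2)
      · exact Or.inr (Or.inr ⟨_, g1, .rc (.ax4 _ _) (.tr (.ax3 _ _) g2)⟩)
      · exact Or.inr (Or.inr ⟨_, .and g1 hK2,
          .rc (.tr (.ax4 _ _) (.ax3 _ _))
              (.tr (.rc (.ax3 _ _) (.tr (.ax4 _ _) (.ax4 _ _))) g2)⟩)
    · rcases ih2 with g2 | g2 | ⟨K2, hK2, g2⟩
      · exact Or.inr (Or.inr ⟨_, g2, .rc (.tr (.ax3 _ _) g1) (.ax4 _ _)⟩)
      · exact Or.inr (Or.inl (.rc g1 g2))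
      · exact Or.inr (Or.inr ⟨K2, hK2, .rc (.tr (.ax3 _ _) g1) g2⟩)
    · rcases ih2 with g2 | g2 | ⟨K2, hK2, g2⟩
      · exact Or.inr (Or.inr ⟨_, .and hK1 g2,
          .rc (.tr (.rc (.ax3 _ _) (.tr (.ax4 _ _) (.ax3 _ _))) g1)
              (.tr (.ax4 _ _) (.ax4 _ _))⟩)
      · exact Or.inr (Or.inr ⟨K1, hK1, .rc g1 (.tr (.ax3 _ _) g2)⟩)
      · exact Or.inr (Or.inr ⟨K1.and K2, .and hK1 hK2,
          .rc (.tr (.rc (.ax3 _ _) (.tr (.ax4 _ _) (.ax3 _ _))) g1)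
              (.tr (.rc (.ax3 _ _) (.tr (.ax4 _ _) (.ax4 _ _))) g2)⟩)

/-- Weakening by a conjunct on the left. -/
lemma thm_strengthen {X K C : Fml} (h : HThm E (X.imp C)) :
    HThm E ((X.and K).imp C) := .tr (.ax3 _ _) h

lemma thm_weaken1 {X K1 K2 C : Fml} (h : HThm E ((X.and K1).imp C)) :
    HThm E ((X.and (K1.and K2)).imp C) :=
  .tr (.rc (.ax3 _ _) (.tr (.ax4 _ _) (.ax3 _ _))) h

lemma thm_weaken2 {X K1 K2 C : Fml} (h : HThm E ((X.and K2).imp C)) :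
    HThm E ((X.and (K1.and K2)).imp C) :=
  .tr (.rc (.ax3 _ _) (.tr (.ax4 _ _) (.ax4 _ _))) h

lemma orE_with_K {Γ : Set Fml} {A B C K : Fml} (hK : ConjOf Γ K)
    (hA : HThm E ((A.and K).imp C)) (hB : HThm E ((B.and K).imp C))
    (hAB : HDer E Γ (A.or B)) : HDer E Γ C := by
  have comm1 : HThm E ((K.and A).imp (A.and K)) := .rc (.ax4 _ _) (.ax3 _ _)
  have comm2 : HThm E ((K.and B).imp (B.and K)) := .rc (.ax4 _ _) (.ax3 _ _)
  have T : HThm E (((A.or B).and K).imp C) :=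
    .tr (.tr (.rc (.ax4 _ _) (.ax3 _ _)) (.ax7 _ _ _))
        (.rd (.tr comm1 hA) (.tr comm2 hB))
  exact .mp (.conj hAB (conjOf_hder hK)) T

/-- Elimination of disjunction in the restricted Hilbert system. -/
lemma hder_orE {Γ : Set Fml} {A B C : Fml} (hAB : HDer E Γ (A.or B))
    (hA : HDer E (insert A Γ) C) (hB : HDer E (insert B Γ) C) :
    HDer E Γ C := by
  -- Reduce each side to: done, or pure `X → C`, or `X ∧ K → C` with `K` from `Γ`.
  have reduce : ∀ X : Fml, HDer E (insert X Γ) C →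
      HDer E Γ C ∨ HThm E (X.imp C) ∨
        ∃ K, ConjOf Γ K ∧ HThm E ((X.and K).imp C) := by
    intro X h
    rcases hder_iff.1 h with h | ⟨G, hG, h⟩
    · exact Or.inl (.thm h)
    · rcases conjOf_insert hG with g | g | ⟨K, hKΓ, g⟩
      · exact Or.inl (.mp (conjOf_hder g) h)
      · exact Or.inr (Or.inl (.tr g h))
      · exact Or.inr (Or.inr ⟨K, hKΓ, .tr g h⟩)
  rcases reduce A hA with h1 | h1 | ⟨K1, hK1, h1⟩
  · exact h1
  · rcases reduce B hB with h2 | h2 | ⟨K2, hK2, h2⟩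
    · exact h2
    · exact .mp hAB (.rd h1 h2)
    · exact orE_with_K hK2 (thm_strengthen h1) h2 hAB
  · rcases reduce B hB with h2 | h2 | ⟨K2, hK2, h2⟩
    · exact h2
    · exact orE_with_K hK1 h1 (thm_strengthen h2) hAB
    · exact orE_with_K (.and hK1 hK2) (thm_weaken1 h1) (thm_weaken2 h2) hAB

end AuxNatDedToHilbert

theorem natded_to_hilbert_WFN2 (Γ : Set Fml) (A : Fml)
    (h : NDer {NRule.impN2} Γ A) :
    HDer ({ExtAx.N2} : Set ExtAx) Γ A := by
  obtain ⟨d⟩ := h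
  induction d with
  | hyp Γ A h => exact .hyp h
  | andI _ _ ih1 ih2 => exact .conj ih1 ih2
  | andE1 _ ih => exact .mp ih (.ax3 _ _)
  | andE2 _ ih => exact .mp ih (.ax4 _ _)
  | orI1 B _ ih => exact .mp ih (.ax1 _ _)
  | orI2 A _ ih => exact .mp ih (.ax2 _ _)
  | orE _ _ _ ih ihA ihB => exact hder_orE ih ihA ihB
  | botE A _ ih => exact .mp ih (.ax14 _)
  | impI _ ih => exact .thm (hder_singleton ih)
  | impE _ _ ih1 ih2 => exact .mp ih1 (hder_empty ih2)
  | impI1 h => exact absurd h (by simp)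
  | impI2 h => exact absurd h (by simp)
  | impIN h => exact absurd h (by simp)
  | impIN2 h hCAD hBD ihC ihB =>
    refine .thm (.ruleN2 rfl (hder_singleton ihC) ?_)
    exact .tr (.ax4 _ _) (hder_singleton ihB)
  | impIChat C h => exact absurd h (by simp)
  | impIDhat C h => exact absurd h (by simp)
  | impIAnd h => exact absurd h (by simp)
  | impIOr h => exact absurd h (by simp)
  | impITr h => exact absurd h (by simp)
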